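/- Let X be a metric space, H₀ and H real Hilbert spaces, Φ : X → H₀ a bounded Borel-measurable map such that the kernel mean embedding Π is injective (characteristic kernel) and its image S = Π(P(X)) is compact, and let U ⊆ H be compact. For each M ≥ 1 let ℓ_M : X^M × U → ℝ satisfy: (1) ℓ_M(σ·x, u) = ℓ_M(x, u) for every permutation σ of {1,…,M}, every x ∈ X^M and u ∈ U; (2) there is B ≥ 0, independent of M, with |ℓ_M(x,u)| ≤ B for all x ∈ X^M, u ∈ U; (3) there is L ≥ 0, independent of M, with |ℓ_M(x,u) − ℓ_M(x',u')| ≤ L·(‖Π̂(x) − Π̂(x')‖ + ‖u − u'‖) for all x, x' ∈ X^M and u, u' ∈ U. Then there exist a strictly increasing sequence of indices (M_p)_p and a function Λ : S × U → ℝ with |Λ(s,u) − Λ(s',u')| ≤ L·(‖s − s'‖ + ‖u − u'‖) for all s, s' ∈ S and u, u' ∈ U, such that lim_{p→∞} sup_{x ∈ X^{M_p}, u ∈ U} |ℓ_{M_p}(x,u) − Λ(Π̂(x), u)| = 0. -/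

import Mathlib

open MeasureTheory

/-- The empirical embedding `Π̂(x) = (1/M) ∑ m, Φ (x m)` of a tuple `x ∈ X^M`. -/
noncomputable def empEmbed {X H₀ : Type*} [AddCommMonoid H₀] [Module ℝ H₀]
    (Φ : X → H₀) {M : ℕ} (x : Fin M → X) : H₀ :=
  (M : ℝ)⁻¹ • ∑ m : Fin M, Φ (x m)

/-- The image `S = Π(P(X))` of the set of all Borel probability measures on `X`
under the kernel mean embedding `Π(μ) = ∫ x, Φ x ∂μ`. -/
def kmeImage {X : Type*} [MeasurableSpace X] {H₀ : Type*} [NormedAddCommGroup H₀]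
    [NormedSpace ℝ H₀] (Φ : X → H₀) : Set H₀ :=
  {h : H₀ | ∃ μ : Measure X, IsProbabilityMeasure μ ∧ h = ∫ x, Φ x ∂μ}

/-- McShane-type Lipschitz extension of `(x,u) ↦ ℓ M x u`, viewed through the
empirical embedding, to all of `H₀ × H`. -/
noncomputable def mcShane {X H₀ H : Type*} [NormedAddCommGroup H₀] [NormedSpace ℝ H₀]
    [NormedAddCommGroup H] (Φ : X → H₀) (U : Set H)
    (ℓ : (M : ℕ) → (Fin M → X) → H → ℝ) (L : ℝ) (M : ℕ) (p : H₀ × H) : ℝ :=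
  ⨅ z : (Fin M → X) × U,
    (ℓ M z.1 z.2 + L * (‖p.1 - empEmbed Φ z.1‖ + ‖p.2 - (z.2 : H)‖))

section McShaneLemmas

set_option linter.unusedSectionVars false

variable {X H₀ H : Type*} [NormedAddCommGroup H₀] [NormedSpace ℝ H₀]
    [NormedAddCommGroup H] [Nonempty X] (Φ : X → H₀) (U : Set H) [Nonempty ↥U]
    (ℓ : (M : ℕ) → (Fin M → X) → H → ℝ)
    (B : ℝ) (L : ℝ) (M : ℕ)

theorem mcShane_bdd (hL : 0 ≤ L) (hbdd : ∀ x : Fin M → X, ∀ u ∈ U, |ℓ M x u| ≤ B) (p : H₀ × H) :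
    BddBelow (Set.range fun z : (Fin M → X) × ↥U =>
      ℓ M z.1 z.2 + L * (‖p.1 - empEmbed Φ z.1‖ + ‖p.2 - (z.2 : H)‖)) := by
  refine ⟨-B, ?_⟩
  rintro _ ⟨z, rfl⟩
  dsimp only
  have h1 := hbdd z.1 z.2 z.2.2
  have h2 : 0 ≤ L * (‖p.1 - empEmbed Φ z.1‖ + ‖p.2 - (z.2 : H)‖) :=
    mul_nonneg hL (add_nonneg (norm_nonneg _) (norm_nonneg _))
  have := neg_abs_le (ℓ M z.1 z.2)
  linarith

theorem mcShane_le (hL : 0 ≤ L) (hbdd : ∀ x : Fin M → X, ∀ u ∈ U, |ℓ M x u| ≤ B) (p : H₀ × H)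
    (z : (Fin M → X) × ↥U) :
    mcShane Φ U ℓ L M p ≤ ℓ M z.1 z.2 + L * (‖p.1 - empEmbed Φ z.1‖ + ‖p.2 - (z.2 : H)‖) :=
  ciInf_le (mcShane_bdd Φ U ℓ B L M hL hbdd p) z

theorem mcShane_ge (hL : 0 ≤ L) (hbdd : ∀ x : Fin M → X, ∀ u ∈ U, |ℓ M x u| ≤ B) (p : H₀ × H) :
    -B ≤ mcShane Φ U ℓ L M p := by
  refine le_ciInf fun z => ?_
  have h1 := hbdd z.1 z.2 z.2.2
  have h2 : 0 ≤ L * (‖p.1 - empEmbed Φ z.1‖ + ‖p.2 - (z.2 : H)‖) :=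
    mul_nonneg hL (add_nonneg (norm_nonneg _) (norm_nonneg _))
  have := neg_abs_le (ℓ M z.1 z.2)
  linarith

theorem mcShane_agrees (hL : 0 ≤ L) (hbdd : ∀ x : Fin M → X, ∀ u ∈ U, |ℓ M x u| ≤ B)
    (hlip : ∀ x x' : Fin M → X, ∀ u ∈ U, ∀ u' ∈ U,
      |ℓ M x u - ℓ M x' u'| ≤ L * (‖empEmbed Φ x - empEmbed Φ x'‖ + ‖u - u'‖))
    (x : Fin M → X) (u : H) (hu : u ∈ U) :
    mcShane Φ U ℓ L M (empEmbed Φ x, u) = ℓ M x u := by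
  refine le_antisymm ?_ ?_
  · have := mcShane_le Φ U ℓ B L M hL hbdd (empEmbed Φ x, u) (x, ⟨u, hu⟩)
    simpa using this
  · refine le_ciInf fun z => ?_
    have h := hlip x z.1 u hu z.2 z.2.2
    have := abs_le.mp h
    simp only at this ⊢
    linarith [this.2]

theorem mcShane_lip_half (hL : 0 ≤ L) (hbdd : ∀ x : Fin M → X, ∀ u ∈ U, |ℓ M x u| ≤ B)
    (p q : H₀ × H) :
    mcShane Φ U ℓ L M p ≤ mcShane Φ U ℓ L M q + L * (‖p.1 - q.1‖ + ‖p.2 - q.2‖) := by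
  rw [← sub_le_iff_le_add]
  refine le_ciInf fun z => ?_
  rw [sub_le_iff_le_add]
  have h := mcShane_le Φ U ℓ B L M hL hbdd p z
  have t1 : ‖p.1 - empEmbed Φ z.1‖ ≤ ‖p.1 - q.1‖ + ‖q.1 - empEmbed Φ z.1‖ :=
    norm_sub_le_norm_sub_add_norm_sub _ _ _
  have t2 : ‖p.2 - (z.2 : H)‖ ≤ ‖p.2 - q.2‖ + ‖q.2 - (z.2 : H)‖ :=
    norm_sub_le_norm_sub_add_norm_sub _ _ _
  have hmul : L * (‖p.1 - empEmbed Φ z.1‖ + ‖p.2 - (z.2 : H)‖) ≤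
      L * ((‖p.1 - q.1‖ + ‖q.1 - empEmbed Φ z.1‖) + (‖p.2 - q.2‖ + ‖q.2 - (z.2 : H)‖)) :=
    mul_le_mul_of_nonneg_left (by linarith) hL
  calc mcShane Φ U ℓ L M p
      ≤ ℓ M z.1 z.2 + L * (‖p.1 - empEmbed Φ z.1‖ + ‖p.2 - (z.2 : H)‖) := h
    _ ≤ (ℓ M z.1 z.2 + L * (‖q.1 - empEmbed Φ z.1‖ + ‖q.2 - (z.2 : H)‖))
        + L * (‖p.1 - q.1‖ + ‖p.2 - q.2‖) := by nlinarith [hmul]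

theorem mcShane_lip (hL : 0 ≤ L) (hbdd : ∀ x : Fin M → X, ∀ u ∈ U, |ℓ M x u| ≤ B)
    (p q : H₀ × H) :
    |mcShane Φ U ℓ L M p - mcShane Φ U ℓ L M q| ≤ L * (‖p.1 - q.1‖ + ‖p.2 - q.2‖) := by
  rw [abs_sub_le_iff]
  constructor
  · have := mcShane_lip_half Φ U ℓ B L M hL hbdd p q
    linarith
  · have := mcShane_lip_half Φ U ℓ B L M hL hbdd q p
    rw [norm_sub_rev (q.1), norm_sub_rev (q.2)] at this
    linarith

end McShaneLemmas

set_option maxHeartbeats 1000000 in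
set_option synthInstance.maxHeartbeats 400000 in
/-- Mean field limit existence for stage costs: permutation-invariant, uniformly bounded
and uniformly Lipschitz functions `ℓ_M : X^M × U → ℝ` admit a subsequence `M_p` and a
Lipschitz limit function `Λ : S × U → ℝ` with
`sup_{x ∈ X^{M_p}, u ∈ U} |ℓ_{M_p}(x,u) - Λ(Π̂(x),u)| → 0`. -/
theorem mfl_stage_costs
    {X : Type*} [MetricSpace X] [MeasurableSpace X] [BorelSpace X]
    {H₀ : Type*} [NormedAddCommGroup H₀] [InnerProductSpace ℝ H₀] [CompleteSpace H₀]
    {H : Type*} [NormedAddCommGroup H] [InnerProductSpace ℝ H] [CompleteSpace H]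
    (Φ : X → H₀) (hΦmeas : StronglyMeasurable Φ) (hΦbdd : ∃ C : ℝ, ∀ x : X, ‖Φ x‖ ≤ C)
    -- the kernel is characteristic: the kernel mean embedding is injective
    (hinj : ∀ μ ν : Measure X, IsProbabilityMeasure μ → IsProbabilityMeasure ν →
      (∫ y, Φ y ∂μ) = (∫ y, Φ y ∂ν) → μ = ν)
    -- the image of the kernel mean embedding is compact
    (hScpt : IsCompact (kmeImage Φ))
    (U : Set H) (hUcpt : IsCompact U)
    (ℓ : (M : ℕ) → (Fin M → X) → H → ℝ)
    -- (1) permutation invariance in the state variable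
    (hperm : ∀ M : ℕ, 1 ≤ M → ∀ σ : Equiv.Perm (Fin M), ∀ x : Fin M → X, ∀ u ∈ U,
      ℓ M (x ∘ σ) u = ℓ M x u)
    -- (2) uniform boundedness
    (B : ℝ) (hB : 0 ≤ B)
    (hbdd : ∀ M : ℕ, 1 ≤ M → ∀ x : Fin M → X, ∀ u ∈ U, |ℓ M x u| ≤ B)
    -- (3) uniform Lipschitz continuity
    (L : ℝ) (hL : 0 ≤ L)
    (hlip : ∀ M : ℕ, 1 ≤ M → ∀ x x' : Fin M → X, ∀ u ∈ U, ∀ u' ∈ U,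
      |ℓ M x u - ℓ M x' u'| ≤
        L * (‖empEmbed Φ x - empEmbed Φ x'‖ + ‖u - u'‖)) :
    ∃ Msub : ℕ → ℕ, StrictMono Msub ∧ (∀ p : ℕ, 1 ≤ Msub p) ∧
      ∃ Λ : H₀ → H → ℝ,
        (∀ s ∈ kmeImage Φ, ∀ s' ∈ kmeImage Φ, ∀ u ∈ U, ∀ u' ∈ U,
          |Λ s u - Λ s' u'| ≤ L * (‖s - s'‖ + ‖u - u'‖)) ∧
        (∀ ε : ℝ, 0 < ε → ∃ N : ℕ, ∀ p : ℕ, N ≤ p → ∀ x : Fin (Msub p) → X, ∀ u ∈ U,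
          |ℓ (Msub p) x u - Λ (empEmbed Φ x) u| ≤ ε) := by
  classical
  obtain ⟨C, hC⟩ := hΦbdd
  -- Degenerate case: `U` empty.
  by_cases hU : U.Nonempty
  swap
  · refine ⟨fun p => p + 1, fun a b h => Nat.succ_lt_succ h, fun p => Nat.le_add_left 1 p,
      fun _ _ => 0, ?_, ?_⟩
    · intro s _ s' _ u hu
      exact absurd ⟨u, hu⟩ hU
    · intro ε hε
      exact ⟨0, fun p _ x u hu => absurd ⟨u, hu⟩ hU⟩
  -- Degenerate case: `X` empty.
  by_cases hX : Nonempty X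
  swap
  · refine ⟨fun p => p + 1, fun a b h => Nat.succ_lt_succ h, fun p => Nat.le_add_left 1 p,
      fun _ _ => 0, ?_, ?_⟩
    · intro s hs s' _ u _ u' _
      obtain ⟨μ, hμ, -⟩ := hs
      have h0 : μ Set.univ = 0 := by
        rw [Set.univ_eq_empty_iff.mpr (not_nonempty_iff.mp hX), measure_empty]
      rw [measure_univ] at h0
      exact absurd h0 one_ne_zero
    · intro ε hε
      exact ⟨0, fun p _ x u _ => absurd ⟨x 0⟩ hX⟩
  -- Main case.
  haveI := hX
  haveI : Nonempty ↥U := hU.to_subtype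
  obtain ⟨u₀, hu₀⟩ := hU
  obtain ⟨x₀⟩ := hX
  -- Empirical embeddings lie in the image of the kernel mean embedding.
  have hemp : ∀ (M : ℕ), 1 ≤ M → ∀ x : Fin M → X, empEmbed Φ x ∈ kmeImage Φ := by
    intro M hM x
    have hMne : (M : ENNReal) ≠ 0 := by simp; omega
    refine ⟨((M : ENNReal))⁻¹ • ∑ m : Fin M, Measure.dirac (x m), ?_, ?_⟩
    · constructor
      rw [Measure.smul_apply, Measure.finset_sum_apply]
      simp only [measure_univ, Finset.sum_const, Finset.card_univ, Fintype.card_fin, smul_eq_mul,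
        nsmul_eq_mul, mul_one]
      exact ENNReal.inv_mul_cancel hMne (ENNReal.natCast_ne_top M)
    · have hint : ∀ m : Fin M, Integrable Φ (Measure.dirac (x m)) := by
        intro m
        refine Integrable.mono' (integrable_const C) hΦmeas.aestronglyMeasurable ?_
        exact Filter.Eventually.of_forall hC
      rw [integral_smul_measure, integral_finset_sum_measure (fun m _ => hint m)]
      simp only [integral_dirac' Φ _ hΦmeas]
      rw [empEmbed]
      congr 1
      simp [ENNReal.toReal_inv]
  -- the embedding of the constant tuple
  have hconst : ∀ M : ℕ, 1 ≤ M → empEmbed Φ (fun _ : Fin M => x₀) = Φ x₀ := by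
    intro M hM
    have hMne : (M : ℝ) ≠ 0 := by simp; omega
    rw [empEmbed, Finset.sum_const, Finset.card_univ, Fintype.card_fin,
      ← Nat.cast_smul_eq_nsmul ℝ, smul_smul, inv_mul_cancel₀ hMne, one_smul]
  have hΦx₀ : Φ x₀ ∈ kmeImage Φ := by
    rw [← hconst 1 le_rfl]; exact hemp 1 le_rfl _
  -- The compact set `K = S ×ˢ U`.
  set K : Set (H₀ × H) := kmeImage Φ ×ˢ U with hK
  have hKcpt : IsCompact K := hScpt.prod hUcpt
  haveI : CompactSpace ↥K := isCompact_iff_compactSpace.mp hKcpt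
  obtain ⟨R, hR⟩ := isBounded_iff_forall_norm_le.mp hKcpt.isBounded
  have hΦu₀K : ((Φ x₀, u₀) : H₀ × H) ∈ K := Set.mem_prod.mpr ⟨hΦx₀, hu₀⟩
  have hR0 : 0 ≤ R := le_trans (norm_nonneg _) (hR _ hΦu₀K)
  set B' : ℝ := B + L * (4 * R) with hB'
  -- The McShane extensions as bounded continuous functions on `K`.
  have hFcont : ∀ M : ℕ, 1 ≤ M → Continuous fun q : ↥K => mcShane Φ U ℓ L M (q : H₀ × H) := by
    intro M hM
    have : LipschitzWith (2 * L).toNNReal (mcShane Φ U ℓ L M) := by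
      refine LipschitzWith.of_dist_le' fun p q => ?_
      rw [Real.dist_eq]
      calc |mcShane Φ U ℓ L M p - mcShane Φ U ℓ L M q|
          ≤ L * (‖p.1 - q.1‖ + ‖p.2 - q.2‖) := mcShane_lip Φ U ℓ B L M hL (hbdd M hM) p q
        _ ≤ 2 * L * dist p q := by
            have h1 : ‖p.1 - q.1‖ ≤ dist p q := by
              rw [← dist_eq_norm]; rw [Prod.dist_eq]; exact le_max_left _ _
            have h2 : ‖p.2 - q.2‖ ≤ dist p q := by
              rw [← dist_eq_norm]; rw [Prod.dist_eq]; exact le_max_right _ _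
            nlinarith [dist_nonneg (x := p) (y := q)]
    exact this.continuous.comp continuous_subtype_val
  -- the sequence of bounded continuous functions
  set fseq : ℕ → BoundedContinuousFunction (↥K) ℝ := fun n =>
    BoundedContinuousFunction.mkOfCompact
      ⟨fun q => mcShane Φ U ℓ L (n + 1) (q : H₀ × H), hFcont (n + 1) (Nat.le_add_left 1 n)⟩
    with hfseq
  have hfseq_apply : ∀ n (q : ↥K), fseq n q = mcShane Φ U ℓ L (n + 1) (q : H₀ × H) :=
    fun n q => rfl
  -- the closed set of uniformly bounded, uniformly Lipschitz functions
  set A : Set (BoundedContinuousFunction (↥K) ℝ) :=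
    {f | (∀ q : ↥K, |f q| ≤ B') ∧ ∀ q r : ↥K,
      |f q - f r| ≤ L * (‖(q : H₀ × H).1 - (r : H₀ × H).1‖ + ‖(q : H₀ × H).2 - (r : H₀ × H).2‖)}
    with hA
  have hclosed : IsClosed A := by
    have h1 : IsClosed {f : BoundedContinuousFunction (↥K) ℝ | ∀ q : ↥K, |f q| ≤ B'} := by
      have he : {f : BoundedContinuousFunction (↥K) ℝ | ∀ q : ↥K, |f q| ≤ B'} =
          ⋂ q : ↥K, {f : BoundedContinuousFunction (↥K) ℝ | |f q| ≤ B'} := by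
        ext f; simp [Set.mem_iInter]
      rw [he]
      exact isClosed_iInter fun q => isClosed_le
        ((continuous_eval_const q).abs) continuous_const
    have h2 : IsClosed {f : BoundedContinuousFunction (↥K) ℝ | ∀ q r : ↥K,
        |f q - f r| ≤ L * (‖(q : H₀ × H).1 - (r : H₀ × H).1‖ +
          ‖(q : H₀ × H).2 - (r : H₀ × H).2‖)} := by
      have he : {f : BoundedContinuousFunction (↥K) ℝ | ∀ q r : ↥K,
          |f q - f r| ≤ L * (‖(q : H₀ × H).1 - (r : H₀ × H).1‖ +
            ‖(q : H₀ × H).2 - (r : H₀ × H).2‖)} =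
          ⋂ q : ↥K, ⋂ r : ↥K, {f : BoundedContinuousFunction (↥K) ℝ |
            |f q - f r| ≤ L * (‖(q : H₀ × H).1 - (r : H₀ × H).1‖ +
              ‖(q : H₀ × H).2 - (r : H₀ × H).2‖)} := by
        ext f; simp [Set.mem_iInter]
      rw [he]
      refine isClosed_iInter fun q => isClosed_iInter fun r => isClosed_le ?_ continuous_const
      exact ((continuous_eval_const q).sub
        (continuous_eval_const r)).abs
    exact h1.inter h2
  have hinA : ∀ f ∈ A, ∀ q : ↥K, f q ∈ Set.Icc (-B') B' := fun f hf q => by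
    exact Set.mem_Icc.mpr (abs_le.mp (hf.1 q))
  have hequi : Equicontinuous ((↑) : A → ↥K → ℝ) := by
    refine Metric.equicontinuous_of_continuity_modulus (fun t => 2 * L * t) ?_ _ ?_
    · have : Continuous fun t : ℝ => 2 * L * t := by continuity
      simpa using this.tendsto 0
    · rintro q r ⟨f, hf⟩
      rw [Real.dist_eq]
      calc |f q - f r|
          ≤ L * (‖(q : H₀ × H).1 - (r : H₀ × H).1‖ + ‖(q : H₀ × H).2 - (r : H₀ × H).2‖) :=
            hf.2 q r
        _ ≤ 2 * L * dist q r := by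
            have h1 : ‖(q : H₀ × H).1 - (r : H₀ × H).1‖ ≤ dist q r := by
              rw [← dist_eq_norm, Subtype.dist_eq, Prod.dist_eq]; exact le_max_left _ _
            have h2 : ‖(q : H₀ × H).2 - (r : H₀ × H).2‖ ≤ dist q r := by
              rw [← dist_eq_norm, Subtype.dist_eq, Prod.dist_eq]; exact le_max_right _ _
            nlinarith [dist_nonneg (x := q) (y := r)]
  have hAcpt : IsCompact A :=
    BoundedContinuousFunction.arzela_ascoli₂ (Set.Icc (-B') B') isCompact_Icc A hclosed
      (fun f q hf => hinA f hf q) hequi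
  -- membership of the sequence in `A`
  have hmem : ∀ n, fseq n ∈ A := by
    intro n
    have hM1 : 1 ≤ n + 1 := Nat.le_add_left 1 n
    constructor
    · intro q
      rw [hfseq_apply]
      have hq1 : (q : H₀ × H).1 ∈ kmeImage Φ := q.2.1
      have hq2 : (q : H₀ × H).2 ∈ U := q.2.2
      have hnormq : ‖(q : H₀ × H)‖ ≤ R := hR _ q.2
      have hq1n : ‖(q : H₀ × H).1‖ ≤ R := le_trans (norm_fst_le _) hnormq
      have hq2n : ‖(q : H₀ × H).2‖ ≤ R := le_trans (norm_snd_le _) hnormq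
      have hΦn : ‖Φ x₀‖ ≤ R := le_trans (norm_fst_le ((Φ x₀, u₀) : H₀ × H)) (hR _ hΦu₀K)
      have hu₀n : ‖u₀‖ ≤ R := le_trans (norm_snd_le ((Φ x₀, u₀) : H₀ × H)) (hR _ hΦu₀K)
      rw [abs_le]
      constructor
      · have := mcShane_ge Φ U ℓ B L (n + 1) hL (hbdd (n + 1) hM1) (q : H₀ × H)
        have hLR : 0 ≤ L * (4 * R) := mul_nonneg hL (by linarith)
        simp only [hB']
        linarith
      · have hle := mcShane_le Φ U ℓ B L (n + 1) hL (hbdd (n + 1) hM1) (q : H₀ × H)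
          ((fun _ : Fin (n + 1) => x₀), ⟨u₀, hu₀⟩)
        rw [hconst (n + 1) hM1] at hle
        have hb := hbdd (n + 1) hM1 (fun _ : Fin (n + 1) => x₀) u₀ hu₀
        have e1 : ‖(q : H₀ × H).1 - Φ x₀‖ ≤ 2 * R := by
          calc ‖(q : H₀ × H).1 - Φ x₀‖ ≤ ‖(q : H₀ × H).1‖ + ‖Φ x₀‖ := norm_sub_le _ _
            _ ≤ 2 * R := by linarith
        have e2 : ‖(q : H₀ × H).2 - u₀‖ ≤ 2 * R := by
          calc ‖(q : H₀ × H).2 - u₀‖ ≤ ‖(q : H₀ × H).2‖ + ‖u₀‖ := norm_sub_le _ _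
            _ ≤ 2 * R := by linarith
        have hmul : L * (‖(q : H₀ × H).1 - Φ x₀‖ + ‖(q : H₀ × H).2 - u₀‖) ≤ L * (4 * R) :=
          mul_le_mul_of_nonneg_left (by linarith) hL
        have := le_abs_self (ℓ (n + 1) (fun _ => x₀) u₀)
        simp only [hB']
        simp only at hle
        linarith [abs_le.mp hb]
    · intro q r
      rw [hfseq_apply, hfseq_apply]
      exact mcShane_lip Φ U ℓ B L (n + 1) hL (hbdd (n + 1) hM1) _ _
  -- extract a uniformly convergent subsequence
  obtain ⟨g, hgA, φ, hφmono, hφtend⟩ := hAcpt.tendsto_subseq hmem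
  refine ⟨fun p => φ p + 1, fun a b h => Nat.succ_lt_succ (hφmono h),
    fun p => Nat.le_add_left 1 (φ p), fun s u => if h : (s, u) ∈ K then g ⟨(s, u), h⟩ else 0,
    ?_, ?_⟩
  · -- Lipschitz property of the limit
    intro s hs s' hs' u hu u' hu'
    have hmem1 : ((s, u) : H₀ × H) ∈ K := Set.mem_prod.mpr ⟨hs, hu⟩
    have hmem2 : ((s', u') : H₀ × H) ∈ K := Set.mem_prod.mpr ⟨hs', hu'⟩
    simp only [dif_pos hmem1, dif_pos hmem2]
    exact hgA.2 ⟨(s, u), hmem1⟩ ⟨(s', u'), hmem2⟩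
  · -- uniform convergence along the subsequence
    intro ε hε
    obtain ⟨N, hN⟩ := Metric.tendsto_atTop.mp hφtend ε hε
    refine ⟨N, fun p hp x u hu => ?_⟩
    have hM1 : 1 ≤ φ p + 1 := Nat.le_add_left 1 (φ p)
    have hsK : ((empEmbed Φ x, u) : H₀ × H) ∈ K :=
      Set.mem_prod.mpr ⟨hemp (φ p + 1) hM1 x, hu⟩
    set q : ↥K := ⟨(empEmbed Φ x, u), hsK⟩ with hq
    simp only [dif_pos hsK]
    have h1 : ℓ (φ p + 1) x u = fseq (φ p) q := by
      rw [hfseq_apply]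
      exact (mcShane_agrees Φ U ℓ B L (φ p + 1) hL (hbdd _ hM1) (hlip _ hM1) x u hu).symm
    rw [h1]
    have h2 : dist (fseq (φ p) q) (g q) ≤ dist (fseq (φ p)) g :=
      BoundedContinuousFunction.dist_coe_le_dist q
    have h3 : dist (fseq (φ p)) g < ε := hN p hp
    rw [Real.dist_eq] at h2
    linarith
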